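/- Let t ≥ 4 and let G be a dense, C_t^3-free 3-graph such that [2t−2] ⊆ V(G) and every 3-element subset of [2t−2] except {1,2,3} is an edge of G. If a, b are distinct vertices in V(G)∖[2t−2] such that {a,b,i} ∈ E(G) for some i ∈ [2t−2], then either {a,b} is a good pair to [2t−2], or N(a,k) = N(b,k) = {i} for every k ∈ [2t−2]∖{i}. -/

import Mathlib

open Finset

/-- An `r`-graph: a finite vertex set together with a finite set of edges,
each edge being a subset of the vertex set. (Uniformity is a separate predicate.) -/
structure HyperGraph where
  verts : Finset ℕ
  edges : Finset (Finset ℕ)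
  edge_sub : ∀ e ∈ edges, e ⊆ verts

namespace HyperGraph

/-- `G` is `r`-uniform: every edge has `r` vertices. -/
def IsUniform (G : HyperGraph) (r : ℕ) : Prop := ∀ e ∈ G.edges, e.card = r

def IsSubgraph (H G : HyperGraph) : Prop := H.verts ⊆ G.verts ∧ H.edges ⊆ G.edges

def IsProperSubgraph (H G : HyperGraph) : Prop := H.IsSubgraph G ∧ H ≠ G

/-- `G` contains a subgraph isomorphic to `F` (an injective copy of `F`). -/
def HasCopy (G F : HyperGraph) : Prop :=
  ∃ f : ℕ → ℕ, Set.InjOn f ↑F.verts ∧ (∀ v ∈ F.verts, f v ∈ G.verts) ∧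
    ∀ e ∈ F.edges, e.image f ∈ G.edges

/-- `G` is `F`-free: it contains no subgraph isomorphic to `F`. -/
def Free (G F : HyperGraph) : Prop := ¬ G.HasCopy F

/-- A feasible weight vector: nonnegative weights summing to 1 over the vertex set. -/
def IsWeighting (G : HyperGraph) (w : ℕ → ℝ) : Prop :=
  (∀ i, 0 ≤ w i) ∧ ∑ i ∈ G.verts, w i = 1

/-- The Lagrangian polynomial `λ(G, w) = Σ_{e ∈ E(G)} Π_{i ∈ e} w i`. -/
def lagrangianAt (G : HyperGraph) (w : ℕ → ℝ) : ℝ := ∑ e ∈ G.edges, ∏ i ∈ e, w i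

/-- The Lagrangian `λ(G)`: the maximum of `λ(G, w)` over feasible weight vectors. -/
noncomputable def lagrangian (G : HyperGraph) : ℝ :=
  sSup {x : ℝ | ∃ w : ℕ → ℝ, G.IsWeighting w ∧ x = G.lagrangianAt w}

/-- `G` is dense: every proper subgraph has strictly smaller Lagrangian. -/
def IsDense (G : HyperGraph) : Prop :=
  ∀ H : HyperGraph, H.IsProperSubgraph G → H.lagrangian < G.lagrangian

/-- The Lagrangian density `π_λ(F) = sup { r! · λ(G) : G an F-free r-graph }`. -/
noncomputable def lagrangianDensity (r : ℕ) (F : HyperGraph) : ℝ :=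
  sSup {x : ℝ | ∃ G : HyperGraph, G.IsUniform r ∧ G.Free F ∧
    x = (r.factorial : ℝ) * G.lagrangian}

/-- The subgraph of `G` induced by `A`. -/
def induce (G : HyperGraph) (A : Finset ℕ) : HyperGraph where
  verts := A
  edges := G.edges.filter (fun e => e ⊆ A)
  edge_sub := fun _ he => (Finset.mem_filter.mp he).2

/-- The link `N(a,b) = { c : {a,b,c} ∈ E(G) }`. -/
def link2 (G : HyperGraph) (a b : ℕ) : Set ℕ := {c | ({a, b, c} : Finset ℕ) ∈ G.edges}

/-- `{a, b}` is a good pair to `A`. -/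
def IsGoodPair (G : HyperGraph) (A : Finset ℕ) (a b : ℕ) : Prop :=
  a ≠ b ∧ a ∈ G.verts ∧ b ∈ G.verts ∧ a ∉ A ∧ b ∉ A ∧
    ∀ k ∈ A, G.link2 a k = {b} ∧ G.link2 b k = {a}

/-- The pairs `{a 1, b 1}, …, {a s, b s}` are good pairs to `A`
partitioning `V(G) ∖ A`. -/
def GoodPartition (G : HyperGraph) (A : Finset ℕ) (s : ℕ) (a b : ℕ → ℕ) : Prop :=
  A ⊆ G.verts ∧
  (∀ v, v ∈ G.verts \ A ↔ ∃ i ∈ Finset.Icc 1 s, v = a i ∨ v = b i) ∧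
  (∀ i ∈ Finset.Icc 1 s, ∀ j ∈ Finset.Icc 1 s, i ≠ j →
    ({a i, b i} : Finset ℕ) ∩ {a j, b j} = ∅) ∧
  (∀ i ∈ Finset.Icc 1 s, G.IsGoodPair A (a i) (b i))

/-- `G` is a good graph to `A`. -/
def IsGoodGraph (G : HyperGraph) (A : Finset ℕ) : Prop := ∃ s a b, G.GoodPartition A s a b

end HyperGraph

open HyperGraph

/-- The complete `r`-graph `K_t^r` on `t` vertices. -/
def completeHyperGraph (t r : ℕ) : HyperGraph where
  verts := Finset.Icc 1 t
  edges := (Finset.Icc 1 t).powersetCard r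
  edge_sub := fun _ he => (Finset.mem_powersetCard.mp he).1

/-- `K_t^{3-}`: the complete 3-graph on `t` vertices with one edge removed. -/
def completeMinus (t : ℕ) : HyperGraph where
  verts := Finset.Icc 1 t
  edges := ((Finset.Icc 1 t).powersetCard 3).filter (fun e => e ≠ ({1,2,3} : Finset ℕ))
  edge_sub := fun _ he => (Finset.mem_powersetCard.mp (Finset.mem_filter.mp he).1).1

/-- The generalized triangle `F_5 = {123, 124, 345}`. -/
def F5 : HyperGraph where
  verts := {1,2,3,4,5}
  edges := {{1,2,3},{1,2,4},{3,4,5}}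
  edge_sub := by decide

/-- The 3-uniform linear cycle of length 3: `C_3^3 = {123, 345, 561}`. -/
def C33 : HyperGraph where
  verts := {1,2,3,4,5,6}
  edges := {{1,2,3},{3,4,5},{5,6,1}}
  edge_sub := by decide

open scoped Classical in
/-- The 3-uniform linear cycle `C_t^3` of length `t`, with vertex set `[2t]` and
edges `{123, 345, …, (2t-3)(2t-2)(2t-1), (2t-1)(2t)1}`. -/
noncomputable def linearCycle (t : ℕ) : HyperGraph where
  verts := Finset.Icc 1 (2*t)
  edges := ((Finset.Icc 1 (2*t)).powersetCard 3).filter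
    (fun e => (∃ k < t - 1, e = ({2*k+1, 2*k+2, 2*k+3} : Finset ℕ)) ∨
      e = ({2*t-1, 2*t, 1} : Finset ℕ))
  edge_sub := fun _ he => (Finset.mem_powersetCard.mp (Finset.mem_filter.mp he).1).1

/-- The 3-graph `S_{2,t}` with vertex set `[t+2]` and edges `{12k : 3 ≤ k ≤ t+2}`. -/
def S2 (t : ℕ) : HyperGraph where
  verts := Finset.Icc 1 (t+2)
  edges := (Finset.Icc 3 (t+2)).image (fun k => ({1,2,k} : Finset ℕ))
  edge_sub := by
    intro e he
    simp only [Finset.mem_image] at he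
    obtain ⟨k, hk, rfl⟩ := he
    simp only [Finset.mem_Icc] at hk
    intro x hx
    simp only [Finset.mem_insert, Finset.mem_singleton] at hx
    simp only [Finset.mem_Icc]
    rcases hx with rfl | rfl | rfl <;> omega

/-- `F` is (up to relabeling) the disjoint union `G ⊔ H`. -/
def IsDisjointUnion (F G H : HyperGraph) : Prop :=
  ∃ f g : ℕ → ℕ, Set.InjOn f ↑G.verts ∧ Set.InjOn g ↑H.verts ∧
    Disjoint (G.verts.image f) (H.verts.image g) ∧
    F.verts = G.verts.image f ∪ H.verts.image g ∧
    F.edges = G.edges.image (fun e => e.image f) ∪ H.edges.image (fun e => e.image g)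

/-- An `r`-graph `H` on `t` vertices is perfect if `π_λ(H) = r! · λ(K_{t-1}^r)`. -/
def IsPerfect (r : ℕ) (H : HyperGraph) : Prop :=
  lagrangianDensity r H =
    (r.factorial : ℝ) * (completeHyperGraph (H.verts.card - 1) r).lagrangian

/-- The Turán number `ex(n, F)` for `r`-graphs on `n` vertices. -/
noncomputable def exNum (n r : ℕ) (F : HyperGraph) : ℕ :=
  sSup {m : ℕ | ∃ G : HyperGraph, G.IsUniform r ∧ G.verts.card = n ∧ G.Free F ∧
    m = G.edges.card}

/-- The defining property of an edge of `O_s`. -/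
def OsPred (s : ℕ) (e : Finset ℕ) : Prop :=
  ∃ i ∈ Finset.Icc 1 s, ∃ j ∈ Finset.Icc 1 s, i ≠ j ∧
    (e = ({2*i-1, 2*i, 2*j-1} : Finset ℕ) ∨ e = ({2*i-1, 2*i, 2*j} : Finset ℕ))

instance (s : ℕ) : DecidablePred (OsPred s) := fun e => by
  unfold OsPred; infer_instance

/-- The 3-graph `O_s` on vertices `a_i = 2i-1`, `b_i = 2i` (`1 ≤ i ≤ s`) with edges
`a_i b_i a_j` and `a_i b_i b_j` for `i ≠ j`. -/
def Os (s : ℕ) : HyperGraph where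
  verts := Finset.Icc 1 (2*s)
  edges := ((Finset.Icc 1 (2*s)).powersetCard 3).filter (OsPred s)
  edge_sub := fun _ he => (Finset.mem_powersetCard.mp (Finset.mem_filter.mp he).1).1

/-- `s = ⌈r^{r-1} / (2 (r-1)!)⌉`. -/
def sVal (r : ℕ) : ℕ := ⌈(r : ℚ)^(r-1) / (2 * ((r-1).factorial : ℚ))⌉₊

/-- The vertex `a_i`, realized as the natural number `r - 2 + i`. -/
def aVert (r i : ℕ) : ℕ := r - 2 + i

/-- The vertex `m_j`: a fresh vertex distinct from `1, …, r-2, a_1, a_2, a_3`. -/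
def mVert (r j : ℕ) : ℕ := r + 1 + j

/-- The edge `e_j = {1, 2, …, r-2, a_1, a_{j+1}}`. -/
def eEdge (r j : ℕ) : Finset ℕ := Finset.Icc 1 (r-2) ∪ {aVert r 1, aVert r (j+1)}

/-- The edge `{a_2, a_3, 1, …, i, m_1, …, m_{r-i-2}}` (for `i = 0` this is
`{a_2, a_3, m_1, …, m_{r-2}}`). -/
def thirdEdge (r i : ℕ) : Finset ℕ :=
  {aVert r 2, aVert r 3} ∪ Finset.Icc 1 i ∪ (Finset.Icc 1 (r - i - 2)).image (mVert r)

/-- The `r`-graph `F_i^r` with edges `e_1`, `e_2` and the third edge above. -/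
def Fgraph (r i : ℕ) : HyperGraph where
  verts := eEdge r 1 ∪ eEdge r 2 ∪ thirdEdge r i
  edges := {eEdge r 1, eEdge r 2, thirdEdge r i}
  edge_sub := by
    intro e he
    simp only [Finset.mem_insert, Finset.mem_singleton] at he
    rcases he with rfl | rfl | rfl
    · exact Finset.subset_union_left.trans Finset.subset_union_left
    · exact Finset.subset_union_right.trans Finset.subset_union_left
    · exact Finset.subset_union_right


-- ===================== auxiliary lemmas for the main theorem =====================

namespace HyperGraph

lemma lagrangianAt_nonneg (G : HyperGraph) {w : ℕ → ℝ} (hw : ∀ i, 0 ≤ w i) :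
    0 ≤ G.lagrangianAt w :=
  Finset.sum_nonneg fun _ _ => Finset.prod_nonneg fun i _ => hw i

lemma lagrangianAt_le_card (G : HyperGraph) {w : ℕ → ℝ} (hw : G.IsWeighting w) :
    G.lagrangianAt w ≤ G.edges.card := by
  have hle1 : ∀ i ∈ G.verts, w i ≤ 1 := by
    intro i hi
    calc w i ≤ ∑ j ∈ G.verts, w j := Finset.single_le_sum (fun j _ => hw.1 j) hi
    _ = 1 := hw.2
  have h1 : ∀ e ∈ G.edges, ∏ i ∈ e, w i ≤ 1 := by
    intro e he
    exact Finset.prod_le_one (fun i _ => hw.1 i) (fun i hi => hle1 i (G.edge_sub e he hi))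
  calc G.lagrangianAt w ≤ ∑ _e ∈ G.edges, (1:ℝ) := Finset.sum_le_sum h1
  _ = G.edges.card := by simp

lemma bddAbove_weightSet (G : HyperGraph) :
    BddAbove {x : ℝ | ∃ w : ℕ → ℝ, G.IsWeighting w ∧ x = G.lagrangianAt w} := by
  refine ⟨G.edges.card, ?_⟩
  rintro x ⟨w, hw, rfl⟩
  exact G.lagrangianAt_le_card hw

lemma le_lagrangian (G : HyperGraph) {w : ℕ → ℝ} (hw : G.IsWeighting w) :
    G.lagrangianAt w ≤ G.lagrangian :=
  le_csSup G.bddAbove_weightSet ⟨w, hw, rfl⟩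

lemma lagrangian_nonneg (G : HyperGraph) (hne : G.verts.Nonempty) : 0 ≤ G.lagrangian := by
  obtain ⟨x, hx⟩ := hne
  have hw : G.IsWeighting (fun i => if i = x then 1 else 0) := by
    constructor
    · intro i; dsimp only; split <;> norm_num
    · simp [Finset.sum_ite_eq' G.verts x (fun _ => (1:ℝ)), hx]
  refine le_trans ?_ (G.le_lagrangian hw)
  exact G.lagrangianAt_nonneg (fun i => by by_cases h : i = x <;> simp [h])

lemma shift_le (G : HyperGraph) {u v : ℕ} (hu : u ∈ G.verts) (hv : v ∈ G.verts)
    (huv : u ≠ v) (hcov : ∀ e ∈ G.edges, u ∈ e → v ∉ e)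
    {w : ℕ → ℝ} (hw : G.IsWeighting w)
    (hS : ∑ e ∈ G.edges.filter (fun e => v ∈ e), ∏ i ∈ e.erase v, w i ≤
          ∑ e ∈ G.edges.filter (fun e => u ∈ e), ∏ i ∈ e.erase u, w i) :
    G.lagrangianAt w ≤ (G.induce (G.verts.erase v)).lagrangian := by
  classical
  set w' : ℕ → ℝ := Function.update (Function.update w v 0) u (w u + w v) with hw'def
  have hw'u : w' u = w u + w v := by simp [hw'def]
  have hw'v : w' v = 0 := by
    rw [hw'def, Function.update_of_ne (Ne.symm huv), Function.update_self]
  have hw'other : ∀ i, i ≠ u → i ≠ v → w' i = w i := by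
    intro i hiu hiv
    rw [hw'def, Function.update_of_ne hiu, Function.update_of_ne hiv]
  have hw'nonneg : ∀ i, 0 ≤ w' i := by
    intro i
    rcases eq_or_ne i u with h | hiu
    · rw [h, hw'u]; exact add_nonneg (hw.1 u) (hw.1 v)
    rcases eq_or_ne i v with h | hiv
    · rw [h, hw'v]
    · rw [hw'other i hiu hiv]; exact hw.1 i
  have huv' : u ∈ G.verts.erase v := Finset.mem_erase.mpr ⟨huv, hu⟩
  have hsum : ∑ i ∈ G.verts.erase v, w' i = 1 := by
    have h1 : ∑ i ∈ G.verts.erase v, w' i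
        = w' u + ∑ i ∈ (G.verts.erase v).erase u, w' i :=
      (Finset.add_sum_erase _ w' huv').symm
    have h2 : ∑ i ∈ (G.verts.erase v).erase u, w' i
        = ∑ i ∈ (G.verts.erase v).erase u, w i := by
      apply Finset.sum_congr rfl
      intro i hi
      have hiu : i ≠ u := (Finset.mem_erase.mp hi).1
      have hiv : i ≠ v := (Finset.mem_erase.mp (Finset.mem_erase.mp hi).2).1
      exact hw'other i hiu hiv
    have h3 : ∑ i ∈ G.verts, w i
        = w v + (w u + ∑ i ∈ (G.verts.erase v).erase u, w i) := by
      rw [Finset.add_sum_erase _ w huv', Finset.add_sum_erase _ w hv]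
    rw [h1, h2, hw'u]
    have := hw.2
    rw [h3] at this
    linarith
  have hWeight : (G.induce (G.verts.erase v)).IsWeighting w' := ⟨hw'nonneg, hsum⟩
  have hedges : (G.induce (G.verts.erase v)).edges = G.edges.filter (fun e => v ∉ e) := by
    show G.edges.filter (fun e => e ⊆ G.verts.erase v) = _
    apply Finset.filter_congr
    intro e he
    rw [Finset.subset_erase]
    constructor
    · exact fun h => h.2
    · exact fun h => ⟨G.edge_sub e he, h⟩
  set Su := ∑ e ∈ G.edges.filter (fun e => u ∈ e), ∏ i ∈ e.erase u, w i with hSu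
  set Sv := ∑ e ∈ G.edges.filter (fun e => v ∈ e), ∏ i ∈ e.erase v, w i with hSv
  set C := ∑ e ∈ (G.edges.filter (fun e => u ∉ e)).filter (fun e => v ∉ e), ∏ i ∈ e, w i with hC
  have hprod_u : ∀ e ∈ G.edges.filter (fun e => u ∈ e),
      ∏ i ∈ e, w i = w u * ∏ i ∈ e.erase u, w i := by
    intro e he
    exact (Finset.mul_prod_erase e w (Finset.mem_filter.mp he).2).symm
  have hprod_v : ∀ e ∈ G.edges.filter (fun e => v ∈ e),
      ∏ i ∈ e, w i = w v * ∏ i ∈ e.erase v, w i := by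
    intro e he
    exact (Finset.mul_prod_erase e w (Finset.mem_filter.mp he).2).symm
  have hdecomp : G.lagrangianAt w = w u * Su + w v * Sv + C := by
    have e1 : G.lagrangianAt w
        = ∑ e ∈ G.edges.filter (fun e => u ∈ e), ∏ i ∈ e, w i
          + ∑ e ∈ G.edges.filter (fun e => u ∉ e), ∏ i ∈ e, w i :=
      (Finset.sum_filter_add_sum_filter_not _ _ _).symm
    have e2 : ∑ e ∈ G.edges.filter (fun e => u ∉ e), ∏ i ∈ e, w i
        = ∑ e ∈ (G.edges.filter (fun e => u ∉ e)).filter (fun e => v ∈ e), ∏ i ∈ e, w i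
          + C :=
      (Finset.sum_filter_add_sum_filter_not _ _ _).symm
    have e3 : (G.edges.filter (fun e => u ∉ e)).filter (fun e => v ∈ e)
        = G.edges.filter (fun e => v ∈ e) := by
      rw [Finset.filter_filter]
      apply Finset.filter_congr
      intro e he
      constructor
      · exact fun h => h.2
      · intro h; exact ⟨fun hu' => hcov e he hu' h, h⟩
    have e4 : ∑ e ∈ G.edges.filter (fun e => u ∈ e), ∏ i ∈ e, w i = w u * Su := by
      rw [hSu, Finset.mul_sum]
      exact Finset.sum_congr rfl hprod_u
    have e5 : ∑ e ∈ G.edges.filter (fun e => v ∈ e), ∏ i ∈ e, w i = w v * Sv := by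
      rw [hSv, Finset.mul_sum]
      exact Finset.sum_congr rfl hprod_v
    rw [e1, e2, e3, e4, e5]; ring
  have hdecomp' : (G.induce (G.verts.erase v)).lagrangianAt w' = (w u + w v) * Su + C := by
    show ∑ e ∈ (G.induce (G.verts.erase v)).edges, ∏ i ∈ e, w' i = _
    rw [hedges]
    have e1 : ∑ e ∈ G.edges.filter (fun e => v ∉ e), ∏ i ∈ e, w' i
        = ∑ e ∈ (G.edges.filter (fun e => v ∉ e)).filter (fun e => u ∈ e), ∏ i ∈ e, w' i
          + ∑ e ∈ (G.edges.filter (fun e => v ∉ e)).filter (fun e => u ∉ e), ∏ i ∈ e, w' i :=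
      (Finset.sum_filter_add_sum_filter_not _ _ _).symm
    have e2 : (G.edges.filter (fun e => v ∉ e)).filter (fun e => u ∈ e)
        = G.edges.filter (fun e => u ∈ e) := by
      rw [Finset.filter_filter]
      apply Finset.filter_congr
      intro e he
      constructor
      · exact fun h => h.2
      · intro h; exact ⟨hcov e he h, h⟩
    have e3 : (G.edges.filter (fun e => v ∉ e)).filter (fun e => u ∉ e)
        = (G.edges.filter (fun e => u ∉ e)).filter (fun e => v ∉ e) := by
      rw [Finset.filter_filter, Finset.filter_filter]
      apply Finset.filter_congr
      intro e _
      tauto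
    have e4 : ∑ e ∈ G.edges.filter (fun e => u ∈ e), ∏ i ∈ e, w' i = (w u + w v) * Su := by
      rw [hSu, Finset.mul_sum]
      apply Finset.sum_congr rfl
      intro e he
      have hue : u ∈ e := (Finset.mem_filter.mp he).2
      have hve : v ∉ e := hcov e (Finset.mem_filter.mp he).1 hue
      rw [← Finset.mul_prod_erase e w' hue, hw'u]
      congr 1
      apply Finset.prod_congr rfl
      intro i hi
      exact hw'other i (Finset.mem_erase.mp hi).1 (fun h => hve (h ▸ (Finset.mem_erase.mp hi).2))
    have e5 : ∑ e ∈ (G.edges.filter (fun e => u ∉ e)).filter (fun e => v ∉ e), ∏ i ∈ e, w' i = C := by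
      rw [hC]
      apply Finset.sum_congr rfl
      intro e he
      apply Finset.prod_congr rfl
      intro i hi
      have h1 := (Finset.mem_filter.mp he)
      have h2 := (Finset.mem_filter.mp h1.1)
      exact hw'other i (fun h => h2.2 (h ▸ hi)) (fun h => h1.2 (h ▸ hi))
    rw [e1, e2, e3, e4, e5]
  have hle : G.lagrangianAt w ≤ (G.induce (G.verts.erase v)).lagrangianAt w' := by
    rw [hdecomp, hdecomp']
    nlinarith [hw.1 v, hS]
  exact le_trans hle ((G.induce (G.verts.erase v)).le_lagrangian hWeight)

lemma dense_covers (G : HyperGraph) (hd : G.IsDense) {u v : ℕ}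
    (hu : u ∈ G.verts) (hv : v ∈ G.verts) (huv : u ≠ v) :
    ∃ e ∈ G.edges, u ∈ e ∧ v ∈ e := by
  classical
  by_contra hcon
  push_neg at hcon
  have hcov : ∀ e ∈ G.edges, u ∈ e → v ∉ e := hcon
  have hcov' : ∀ e ∈ G.edges, v ∈ e → u ∉ e := fun e he hv' hu' => hcov e he hu' hv'
  have hprop : ∀ x : ℕ, x ∈ G.verts → (G.induce (G.verts.erase x)).IsProperSubgraph G := by
    intro x hx
    constructor
    · exact ⟨Finset.erase_subset _ _, Finset.filter_subset _ _⟩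
    · intro h
      have h2 : (G.induce (G.verts.erase x)).verts = G.verts := congrArg HyperGraph.verts h
      have h3 : G.verts.erase x = G.verts := h2
      exact (Finset.erase_eq_self.mp h3) hx
  have h1 := hd _ (hprop u hu)
  have h2 := hd _ (hprop v hv)
  have hmax : G.lagrangian ≤ max (G.induce (G.verts.erase u)).lagrangian
      (G.induce (G.verts.erase v)).lagrangian := by
    apply Real.sSup_le
    · rintro x ⟨w, hw, rfl⟩
      rcases le_total
        (∑ e ∈ G.edges.filter (fun e => v ∈ e), ∏ i ∈ e.erase v, w i)
        (∑ e ∈ G.edges.filter (fun e => u ∈ e), ∏ i ∈ e.erase u, w i) with h | h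
      · exact le_trans (G.shift_le hu hv huv hcov hw h) (le_max_right _ _)
      · exact le_trans (G.shift_le hv hu (Ne.symm huv) hcov' hw h) (le_max_left _ _)
    · have hm : v ∈ G.verts.erase u := Finset.mem_erase.mpr ⟨Ne.symm huv, hv⟩
      exact le_trans ((G.induce (G.verts.erase u)).lagrangian_nonneg ⟨v, hm⟩) (le_max_left _ _)
  rcases max_cases (G.induce (G.verts.erase u)).lagrangian
      (G.induce (G.verts.erase v)).lagrangian with ⟨hm, _⟩ | ⟨hm, _⟩ <;> rw [hm] at hmax <;> linarith

end HyperGraph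


lemma orderEmb_lb (P : Finset ℕ) {n : ℕ} (hcard : P.card = n) (h1 : ∀ x ∈ P, 1 ≤ x) :
    ∀ m (h : m < n), m + 1 ≤ P.orderEmbOfFin hcard ⟨m, h⟩ := by
  intro m
  induction m with
  | zero => intro h; exact h1 _ (P.orderEmbOfFin_mem hcard ⟨0, h⟩)
  | succ k ih =>
    intro h
    have hk : k < n := Nat.lt_of_succ_lt h
    have h2 : P.orderEmbOfFin hcard ⟨k, hk⟩ < P.orderEmbOfFin hcard ⟨k+1, h⟩ := by
      apply (P.orderEmbOfFin hcard).strictMono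
      exact Fin.mk_lt_mk.mpr (Nat.lt_succ_self k)
    have := ih hk
    omega

lemma exists_path_order (t : ℕ) (ht : 4 ≤ t) (v1 v5 : ℕ) (h15 : v1 ≠ v5)
    (P : Finset ℕ) (hP : P ⊆ Finset.Icc 1 (2*t-2)) (hcard : P.card = 2*t-5)
    (h1P : v1 ∉ P) (h5P : v5 ∉ P) :
    ∃ u : ℕ → ℕ,
      (∀ j, j ≤ 2*t-6 → u j ∈ P) ∧
      (∀ j j', j ≤ 2*t-6 → j' ≤ 2*t-6 → u j = u j' → j = j') ∧
      ({v5, u 0, u 1} : Finset ℕ) ≠ {1,2,3} ∧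
      (∀ k, 3 ≤ k → k ≤ t-2 → ({u (2*k-5), u (2*k-4), u (2*k-3)} : Finset ℕ) ≠ {1,2,3}) ∧
      ({u (2*t-7), u (2*t-6), v1} : Finset ℕ) ≠ {1,2,3} := by
  classical
  have h1 : ∀ x ∈ P, 1 ≤ x := fun x hx => (Finset.mem_Icc.mp (hP hx)).1
  set u : ℕ → ℕ := fun j => if h : j < 2*t-5 then P.orderEmbOfFin hcard ⟨j, h⟩ else 0 with hu
  have humem : ∀ j, j < 2*t-5 → u j ∈ P := by
    intro j hj
    simp only [hu, dif_pos hj]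
    exact P.orderEmbOfFin_mem hcard ⟨j, hj⟩
  have hulb : ∀ j, (hj : j < 2*t-5) → j + 1 ≤ u j := by
    intro j hj
    simp only [hu, dif_pos hj]
    exact orderEmb_lb P hcard h1 j hj
  have humono : ∀ j j', j < j' → j' < 2*t-5 → u j < u j' := by
    intro j j' hjj hj'
    have hj : j < 2*t-5 := lt_trans hjj hj'
    simp only [hu, dif_pos hj, dif_pos hj']
    exact (P.orderEmbOfFin hcard).strictMono (Fin.mk_lt_mk.mpr hjj)
  have huinj : ∀ j j', j < 2*t-5 → j' < 2*t-5 → u j = u j' → j = j' := by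
    intro j j' hj hj' heq
    rcases Nat.lt_trichotomy j j' with h | h | h
    · exact absurd heq (Nat.ne_of_lt (humono j j' h hj'))
    · exact h
    · exact absurd heq.symm (Nat.ne_of_lt (humono j' j h hj))
  by_cases hbad : ({v5, u 0, u 1} : Finset ℕ) = {1,2,3}
  · -- use descending order
    refine ⟨fun j => u (2*t-6-j), ?_, ?_, ?_, ?_, ?_⟩
    · intro j _; exact humem _ (by omega)
    · intro j j' hj hj' heq
      have := huinj _ _ (by omega) (by omega) heq
      omega
    · -- first edge
      intro heq
      have hm : u (2*t-6-0) ∈ ({1,2,3} : Finset ℕ) := by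
        rw [← heq]; simp
      have hle3 : u (2*t-6) ≤ 3 := by
        simp only [Nat.sub_zero] at hm
        simp only [Finset.mem_insert, Finset.mem_singleton] at hm
        omega
      have hge := hulb (2*t-6) (by omega)
      have ht4 : t = 4 := by omega
      subst ht4
      norm_num at heq hbad
      -- heq : {v5, u 2, u 1} = {1,2,3}, hbad : {v5, u 0, u 1} = {1,2,3}
      have h0m : u 0 ∈ ({v5, u 2, u 1} : Finset ℕ) := by
        rw [heq, ← hbad]; simp
      simp only [Finset.mem_insert, Finset.mem_singleton] at h0m
      rcases h0m with h | h | h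
      · exact h5P (h ▸ humem 0 (by omega))
      · exact absurd h (Nat.ne_of_lt (humono 0 2 (by omega) (by omega)))
      · exact absurd h (Nat.ne_of_lt (humono 0 1 (by omega) (by omega)))
    · -- middle edges
      intro k hk3 hkt heq
      have hidx : 2*t-6-(2*k-5) = 2*t-2*k-1 := by omega
      have hm : u (2*t-6-(2*k-5)) ∈ ({1,2,3} : Finset ℕ) := by
        rw [← heq]; simp
      rw [hidx] at hm
      have hge : 2*t-2*k ≤ u (2*t-2*k-1) := by
        have := hulb (2*t-2*k-1) (by omega)
        omega
      simp only [Finset.mem_insert, Finset.mem_singleton] at hm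
      omega
    · -- last edge
      intro heq
      have heq2 : ({u (2*t-6-(2*t-7)), u (2*t-6-(2*t-6)), v1} : Finset ℕ) = {1,2,3} := heq
      have hi1 : 2*t-6-(2*t-7) = 1 := by omega
      have hi0 : 2*t-6-(2*t-6) = 0 := by omega
      rw [hi1, hi0] at heq2
      have hv1m : v1 ∈ ({v5, u 0, u 1} : Finset ℕ) := by
        rw [hbad, ← heq2]; simp
      simp only [Finset.mem_insert, Finset.mem_singleton] at hv1m
      rcases hv1m with h | h | h
      · exact h15 h
      · exact h1P (h ▸ humem 0 (by omega))
      · exact h1P (h ▸ humem 1 (by omega))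
  · -- ascending order works
    refine ⟨u, ?_, ?_, hbad, ?_, ?_⟩
    · intro j hj; exact humem j (by omega)
    · intro j j' hj hj' heq; exact huinj j j' (by omega) (by omega) heq
    · intro k hk3 hkt heq
      have hm : u (2*k-3) ∈ ({1,2,3} : Finset ℕ) := by
        rw [← heq]; simp
      have hge : 2*k-2 ≤ u (2*k-3) := by
        have := hulb (2*k-3) (by omega)
        omega
      simp only [Finset.mem_insert, Finset.mem_singleton] at hm
      omega
    · intro heq
      have hm : u (2*t-6) ∈ ({1,2,3} : Finset ℕ) := by
        rw [← heq]; simp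
      have hge := hulb (2*t-6) (by omega)
      have hle3 : u (2*t-6) ≤ 3 := by
        simp only [Finset.mem_insert, Finset.mem_singleton] at hm
        omega
      have ht4 : t = 4 := by omega
      subst ht4
      norm_num at heq
      -- heq : {u 1, u 2, v1} = {1,2,3}
      have hu1 : u 1 ∈ ({1,2,3} : Finset ℕ) := by rw [← heq]; simp
      have hu2 : u 2 ∈ ({1,2,3} : Finset ℕ) := by rw [← heq]; simp
      simp only [Finset.mem_insert, Finset.mem_singleton] at hu1 hu2
      have hl1 : 2 ≤ u 1 := hulb 1 (by omega)
      have hl2 : 3 ≤ u 2 := hulb 2 (by omega)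
      have hm12 : u 1 < u 2 := humono 1 2 (by omega) (by omega)
      have hu1v : u 1 = 2 := by omega
      have hu2v : u 2 = 3 := by omega
      have h1m : (1:ℕ) ∈ ({u 1, u 2, v1} : Finset ℕ) := by rw [heq]; simp
      simp only [Finset.mem_insert, Finset.mem_singleton] at h1m
      have hv1 : v1 = 1 := by omega
      have hl0 : 1 ≤ u 0 := hulb 0 (by omega)
      have hm01 : u 0 < u 1 := humono 0 1 (by omega) (by omega)
      have hu0v : u 0 = 1 := by omega
      exact h1P (by rw [← hv1] at hu0v; rw [← hu0v]; exact humem 0 (by omega))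

lemma no_cycle (t : ℕ) (ht : 4 ≤ t) (G : HyperGraph)
    (hfree : G.Free (linearCycle t))
    (hsub : Finset.Icc 1 (2*t-2) ⊆ G.verts)
    (hK : ∀ e ⊆ Finset.Icc 1 (2*t-2), e.card = 3 → e ≠ ({1,2,3} : Finset ℕ) → e ∈ G.edges)
    (v1 v2 v3 v4 v5 : ℕ)
    (hd12 : v1 ≠ v2) (hd13 : v1 ≠ v3) (hd14 : v1 ≠ v4) (hd15 : v1 ≠ v5)
    (hd23 : v2 ≠ v3) (hd24 : v2 ≠ v4) (hd25 : v2 ≠ v5)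
    (hd34 : v3 ≠ v4) (hd35 : v3 ≠ v5) (hd45 : v4 ≠ v5)
    (hv1 : v1 ∈ Finset.Icc 1 (2*t-2)) (hv5 : v5 ∈ Finset.Icc 1 (2*t-2))
    (hv2A : v2 ∉ Finset.Icc 1 (2*t-2))
    (hv34 : v3 ∉ Finset.Icc 1 (2*t-2) ∨ v4 ∉ Finset.Icc 1 (2*t-2))
    (he1 : ({v1,v2,v3} : Finset ℕ) ∈ G.edges)
    (he2 : ({v3,v4,v5} : Finset ℕ) ∈ G.edges) : False := by
  classical
  set A := Finset.Icc 1 (2*t-2) with hA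
  have hv2 : v2 ∈ G.verts := G.edge_sub _ he1 (by simp)
  have hv3 : v3 ∈ G.verts := G.edge_sub _ he1 (by simp)
  have hv4 : v4 ∈ G.verts := G.edge_sub _ he2 (by simp)
  -- find the pool P
  have hD : 2*t-5 ≤ (A \ ({v1,v2,v3,v4,v5} : Finset ℕ)).card := by
    have hcardA : A.card = 2*t-2 := by rw [hA, Nat.card_Icc]; omega
    have key : ∀ w1 w2 w3 : ℕ, (∀ x, x ∈ A → x ∈ ({v1,v2,v3,v4,v5} : Finset ℕ) →
        x ∈ ({w1,w2,w3} : Finset ℕ)) → 2*t-5 ≤ (A \ ({v1,v2,v3,v4,v5} : Finset ℕ)).card := by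
      intro w1 w2 w3 hw
      have hsub2 : A \ ({w1,w2,w3} : Finset ℕ) ⊆ A \ ({v1,v2,v3,v4,v5} : Finset ℕ) := by
        intro x hx
        rw [Finset.mem_sdiff] at hx ⊢
        exact ⟨hx.1, fun hmem => hx.2 (hw x hx.1 hmem)⟩
      have hle := Finset.card_le_card hsub2
      have hc3 : ({w1,w2,w3} : Finset ℕ).card ≤ 3 :=
        le_trans (Finset.card_insert_le _ _)
          (by exact Nat.add_le_add_right (le_trans (Finset.card_insert_le _ _) (by simp)) 1)
      have hsd := Finset.le_card_sdiff ({w1,w2,w3} : Finset ℕ) A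
      omega
    rcases hv34 with h3 | h4
    · refine key v1 v4 v5 ?_
      intro x hxA hmem
      simp only [Finset.mem_insert, Finset.mem_singleton] at hmem ⊢
      rcases hmem with rfl | rfl | rfl | rfl | rfl
      · tauto
      · exact absurd hxA hv2A
      · exact absurd hxA h3
      · tauto
      · tauto
    · refine key v1 v3 v5 ?_
      intro x hxA hmem
      simp only [Finset.mem_insert, Finset.mem_singleton] at hmem ⊢
      rcases hmem with rfl | rfl | rfl | rfl | rfl
      · tauto
      · exact absurd hxA hv2A
      · tauto
      · exact absurd hxA h4
      · tauto
  obtain ⟨P, hPD, hPcard⟩ := Finset.exists_subset_card_eq hD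
  have hPA : P ⊆ A := fun x hx => (Finset.mem_sdiff.mp (hPD hx)).1
  have hPv : ∀ x ∈ P, x ∉ ({v1,v2,v3,v4,v5} : Finset ℕ) :=
    fun x hx => (Finset.mem_sdiff.mp (hPD hx)).2
  have h1P : v1 ∉ P := fun h => hPv _ h (by simp)
  have h5P : v5 ∉ P := fun h => hPv _ h (by simp)
  obtain ⟨u, humem, huinj, H0, Hmid, Hlast⟩ :=
    exists_path_order t ht v1 v5 hd15 P hPA hPcard h1P h5P
  have hup : ∀ j, j ≤ 2*t-6 → u j ∈ P := humem
  set f : ℕ → ℕ := fun j =>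
    if j = 1 then v1 else if j = 2 then v2 else if j = 3 then v3
    else if j = 4 then v4 else if j = 5 then v5 else u (j-6) with hf
  have hf1 : f 1 = v1 := by norm_num [hf]
  have hf2 : f 2 = v2 := by norm_num [hf]
  have hf3 : f 3 = v3 := by norm_num [hf]
  have hf4 : f 4 = v4 := by norm_num [hf]
  have hf5 : f 5 = v5 := by norm_num [hf]
  have hfbig : ∀ j, 6 ≤ j → f j = u (j-6) := by
    intro j hj
    simp only [hf]
    rw [if_neg (by omega), if_neg (by omega), if_neg (by omega),
      if_neg (by omega), if_neg (by omega)]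
  have hf6 : f 6 = u 0 := by rw [hfbig 6 (by omega)]
  have hf7 : f 7 = u 1 := by rw [hfbig 7 (by omega)]
  -- small fact: values of u and the vi's are disjoint
  have huv : ∀ j, j ≤ 2*t-6 → u j ≠ v1 ∧ u j ≠ v2 ∧ u j ≠ v3 ∧ u j ≠ v4 ∧ u j ≠ v5 := by
    intro j hj
    have := hPv _ (hup j hj)
    simp only [Finset.mem_insert, Finset.mem_singleton] at this
    push_neg at this
    exact this
  apply hfree
  refine ⟨f, ?_, ?_, ?_⟩
  · -- injective
    intro x hx y hy heq
    simp only [linearCycle, Finset.coe_Icc, Set.mem_Icc] at hx hy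
    obtain ⟨hx1, hx2⟩ := hx
    obtain ⟨hy1, hy2⟩ := hy
    by_cases hx5 : x ≤ 5 <;> by_cases hy5 : y ≤ 5
    · interval_cases x <;> interval_cases y <;>
        simp only [hf1, hf2, hf3, hf4, hf5] at heq <;>
        first
          | rfl
          | exact absurd heq hd12 | exact absurd heq hd13 | exact absurd heq hd14
          | exact absurd heq hd15 | exact absurd heq hd23 | exact absurd heq hd24
          | exact absurd heq hd25 | exact absurd heq hd34 | exact absurd heq hd35
          | exact absurd heq hd45
          | exact absurd heq.symm hd12 | exact absurd heq.symm hd13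
          | exact absurd heq.symm hd14 | exact absurd heq.symm hd15
          | exact absurd heq.symm hd23 | exact absurd heq.symm hd24
          | exact absurd heq.symm hd25 | exact absurd heq.symm hd34
          | exact absurd heq.symm hd35 | exact absurd heq.symm hd45
    · exfalso
      rw [hfbig y (by omega)] at heq
      obtain ⟨m1, m2, m3, m4, m5⟩ := huv (y-6) (by omega)
      interval_cases x <;>
        simp only [hf1, hf2, hf3, hf4, hf5] at heq <;>
        first
          | exact m1 heq.symm | exact m2 heq.symm | exact m3 heq.symm
          | exact m4 heq.symm | exact m5 heq.symm
    · exfalso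
      rw [hfbig x (by omega)] at heq
      obtain ⟨m1, m2, m3, m4, m5⟩ := huv (x-6) (by omega)
      interval_cases y <;>
        simp only [hf1, hf2, hf3, hf4, hf5] at heq <;>
        first
          | exact m1 heq | exact m2 heq | exact m3 heq
          | exact m4 heq | exact m5 heq
    · rw [hfbig x (by omega), hfbig y (by omega)] at heq
      have := huinj _ _ (by omega) (by omega) heq
      omega
  · -- maps into verts
    intro v hv
    simp only [linearCycle, Finset.mem_Icc] at hv
    obtain ⟨hva, hvb⟩ := hv
    by_cases h5 : v ≤ 5
    · interval_cases v
      · rw [hf1]; exact hsub hv1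
      · rw [hf2]; exact hv2
      · rw [hf3]; exact hv3
      · rw [hf4]; exact hv4
      · rw [hf5]; exact hsub hv5
    · rw [hfbig v (by omega)]
      exact hsub (hPA (hup (v-6) (by omega)))
  · -- edges
    intro e he
    have he' : (∃ k < t - 1, e = ({2*k+1, 2*k+2, 2*k+3} : Finset ℕ)) ∨
        e = ({2*t-1, 2*t, 1} : Finset ℕ) := by
      have := Finset.mem_filter.mp he
      exact this.2
    rcases he' with ⟨k, hk, rfl⟩ | rfl
    · rw [Finset.image_insert, Finset.image_insert, Finset.image_singleton]
      by_cases hk0 : k = 0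
      · subst hk0; norm_num [hf1, hf2, hf3]; exact he1
      by_cases hk1 : k = 1
      · subst hk1; norm_num [hf3, hf4, hf5]; exact he2
      by_cases hk2 : k = 2
      · subst hk2
        norm_num [hf5, hf6, hf7]
        apply hK
        · intro x hx
          simp only [Finset.mem_insert, Finset.mem_singleton] at hx
          rcases hx with rfl | rfl | rfl
          · exact hv5
          · exact hPA (hup 0 (by omega))
          · exact hPA (hup 1 (by omega))
        · rw [Finset.card_eq_three]
          refine ⟨v5, u 0, u 1, ?_, ?_, ?_, rfl⟩
          · exact fun h => (huv 0 (by omega)).2.2.2.2 h.symm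
          · exact fun h => (huv 1 (by omega)).2.2.2.2 h.symm
          · intro h; have := huinj 0 1 (by omega) (by omega) h; omega
        · exact H0
      · -- 3 ≤ k ≤ t-2
        have hk3 : 3 ≤ k := by omega
        have hkt : k ≤ t-2 := by omega
        have ei1 : 2*k+1-6 = 2*k-5 := by omega
        have ei2 : 2*k+2-6 = 2*k-4 := by omega
        have ei3 : 2*k+3-6 = 2*k-3 := by omega
        have hA1 : f (2*k+1) = u (2*k-5) := by rw [hfbig _ (by omega), ei1]
        have hA2 : f (2*k+2) = u (2*k-4) := by rw [hfbig _ (by omega), ei2]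
        have hA3 : f (2*k+3) = u (2*k-3) := by rw [hfbig _ (by omega), ei3]
        rw [hA1, hA2, hA3]
        apply hK
        · intro x hx
          simp only [Finset.mem_insert, Finset.mem_singleton] at hx
          rcases hx with rfl | rfl | rfl
          · exact hPA (hup _ (by omega))
          · exact hPA (hup _ (by omega))
          · exact hPA (hup _ (by omega))
        · rw [Finset.card_eq_three]
          refine ⟨_, _, _, ?_, ?_, ?_, rfl⟩
          · intro h; have := huinj _ _ (by omega) (by omega) h; omega
          · intro h; have := huinj _ _ (by omega) (by omega) h; omega
          · intro h; have := huinj _ _ (by omega) (by omega) h; omega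
        · exact Hmid k hk3 hkt
    · rw [Finset.image_insert, Finset.image_insert, Finset.image_singleton]
      have ej1 : 2*t-1-6 = 2*t-7 := by omega
      have ej2 : 2*t-6 = 2*t-6 := rfl
      have hB1 : f (2*t-1) = u (2*t-7) := by rw [hfbig _ (by omega), ej1]
      have hB2 : f (2*t) = u (2*t-6) := by rw [hfbig _ (by omega)]
      rw [hB1, hB2, hf1]
      apply hK
      · intro x hx
        simp only [Finset.mem_insert, Finset.mem_singleton] at hx
        rcases hx with rfl | rfl | rfl
        · exact hPA (hup _ (by omega))
        · exact hPA (hup _ (by omega))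
        · exact hv1
      · rw [Finset.card_eq_three]
        refine ⟨_, _, _, ?_, ?_, ?_, rfl⟩
        · intro h; have := huinj _ _ (by omega) (by omega) h; omega
        · exact (huv (2*t-7) (by omega)).1
        · exact (huv (2*t-6) (by omega)).1
      · exact Hlast

lemma edge3_distinct (G : HyperGraph) (h3 : G.IsUniform 3) {x y z : ℕ}
    (h : ({x,y,z} : Finset ℕ) ∈ G.edges) : x ≠ y ∧ x ≠ z ∧ y ≠ z := by
  have hc := h3 _ h
  have key : ∀ (s : Finset ℕ) (u v : ℕ), s ⊆ ({u,v} : Finset ℕ) → s.card ≤ 2 :=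
    fun s u v hs => le_trans (Finset.card_le_card hs)
      (le_trans (Finset.card_insert_le _ _) (by simp))
  refine ⟨fun h' => ?_, fun h' => ?_, fun h' => ?_⟩
  · have h2 := key ({x,y,z} : Finset ℕ) y z (by
      intro w hw
      simp only [Finset.mem_insert, Finset.mem_singleton] at hw ⊢
      rcases hw with rfl | rfl | rfl
      · exact Or.inl h'
      · exact Or.inl rfl
      · exact Or.inr rfl)
    omega
  · have h2 := key ({x,y,z} : Finset ℕ) y z (by
      intro w hw
      simp only [Finset.mem_insert, Finset.mem_singleton] at hw ⊢
      rcases hw with rfl | rfl | rfl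
      · exact Or.inr h'
      · exact Or.inl rfl
      · exact Or.inr rfl)
    omega
  · have h2 := key ({x,y,z} : Finset ℕ) x z (by
      intro w hw
      simp only [Finset.mem_insert, Finset.mem_singleton] at hw ⊢
      rcases hw with rfl | rfl | rfl
      · exact Or.inl rfl
      · exact Or.inr h'
      · exact Or.inr rfl)
    omega

lemma exists_third {e : Finset ℕ} (hc : e.card = 3) {x y : ℕ} (hx : x ∈ e) (hy : y ∈ e)
    (hxy : x ≠ y) : ∃ c, c ≠ x ∧ c ≠ y ∧ e = ({x,y,c} : Finset ℕ) := by
  have h1 : y ∈ e.erase x := Finset.mem_erase.mpr ⟨Ne.symm hxy, hy⟩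
  have hc2 : ((e.erase x).erase y).card = 1 := by
    rw [Finset.card_erase_of_mem h1, Finset.card_erase_of_mem hx, hc]
  obtain ⟨c, hcc⟩ := Finset.card_eq_one.mp hc2
  have hcm : c ∈ (e.erase x).erase y := by rw [hcc]; simp
  have hcx : c ≠ x := (Finset.mem_erase.mp (Finset.mem_erase.mp hcm).2).1
  have hcy : c ≠ y := (Finset.mem_erase.mp hcm).1
  refine ⟨c, hcx, hcy, ?_⟩
  have h4 : insert x (insert y ({c} : Finset ℕ)) = e := by
    rw [← hcc, Finset.insert_erase h1, Finset.insert_erase hx]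
  exact h4.symm

lemma pick_other (t : ℕ) (ht : 4 ≤ t) (x y : ℕ) :
    ∃ z ∈ Finset.Icc 1 (2*t-2), z ≠ x ∧ z ≠ y := by
  by_contra h
  push_neg at h
  have hsub : Finset.Icc 1 (2*t-2) ⊆ ({x, y} : Finset ℕ) := by
    intro z hz
    simp only [Finset.mem_insert, Finset.mem_singleton]
    by_cases hzx : z = x
    · exact Or.inl hzx
    · exact Or.inr (h z hz hzx)
  have hcard := Finset.card_le_card hsub
  rw [Nat.card_Icc] at hcard
  have h2 : ({x, y} : Finset ℕ).card ≤ 2 :=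
    le_trans (Finset.card_insert_le _ _) (by simp)
  omega

/-- let `t ≥ 4` and let `G` be a dense `C_t^3`-free 3-graph such that
every 3-subset of `[2t-2]` except `{1,2,3}` is an edge.  If `a ≠ b` lie outside
`[2t-2]` and `{a,b,i} ∈ E(G)` for some `i ∈ [2t-2]`, then either `{a,b}` is a good
pair to `[2t-2]`, or `N(a,k) = N(b,k) = {i}` for every `k ∈ [2t-2] ∖ {i}`. -/
lemma tri_perm1 (x y z : ℕ) : ({x,y,z} : Finset ℕ) = ({z,y,x} : Finset ℕ) := by
  ext w; simp only [Finset.mem_insert, Finset.mem_singleton]; tauto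
lemma tri_perm2 (x y z : ℕ) : ({x,y,z} : Finset ℕ) = ({y,x,z} : Finset ℕ) := by
  ext w; simp only [Finset.mem_insert, Finset.mem_singleton]; tauto
lemma tri_perm3 (x y z : ℕ) : ({x,y,z} : Finset ℕ) = ({x,z,y} : Finset ℕ) := by
  ext w; simp only [Finset.mem_insert, Finset.mem_singleton]; tauto
lemma tri_perm4 (x y z : ℕ) : ({x,y,z} : Finset ℕ) = ({y,z,x} : Finset ℕ) := by
  ext w; simp only [Finset.mem_insert, Finset.mem_singleton]; tauto
lemma tri_perm5 (x y z : ℕ) : ({x,y,z} : Finset ℕ) = ({z,x,y} : Finset ℕ) := by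
  ext w; simp only [Finset.mem_insert, Finset.mem_singleton]; tauto

theorem good_pair_or_star (t : ℕ) (ht : 4 ≤ t) (G : HyperGraph)
    (h3 : G.IsUniform 3) (hd : G.IsDense) (hfree : G.Free (linearCycle t))
    (hsub : Finset.Icc 1 (2 * t - 2) ⊆ G.verts)
    (hK : ∀ e ⊆ Finset.Icc 1 (2 * t - 2), e.card = 3 →
      e ≠ ({1, 2, 3} : Finset ℕ) → e ∈ G.edges)
    (a b : ℕ) (ha : a ∈ G.verts) (hb : b ∈ G.verts) (hab : a ≠ b)
    (haA : a ∉ Finset.Icc 1 (2 * t - 2)) (hbA : b ∉ Finset.Icc 1 (2 * t - 2))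
    (i : ℕ) (hi : i ∈ Finset.Icc 1 (2 * t - 2))
    (he : ({a, b, i} : Finset ℕ) ∈ G.edges) :
    G.IsGoodPair (Finset.Icc 1 (2 * t - 2)) a b ∨
      ∀ k ∈ Finset.Icc 1 (2 * t - 2), k ≠ i →
        G.link2 a k = ({i} : Set ℕ) ∧ G.link2 b k = ({i} : Set ℕ) := by
  classical
  have hia : i ≠ a := fun h => haA (h ▸ hi)
  have hib : i ≠ b := fun h => hbA (h ▸ hi)
  have hout : ∀ x y : ℕ, x ∈ Finset.Icc 1 (2*t-2) → y ∉ Finset.Icc 1 (2*t-2) → y ≠ x :=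
    fun x y hx hy h => hy (h ▸ hx)
  have pair_edge : ∀ x y : ℕ, x ∈ G.verts → y ∈ G.verts → x ≠ y →
      ∃ c, c ≠ x ∧ c ≠ y ∧ ({x,y,c} : Finset ℕ) ∈ G.edges := by
    intro x y hx hy hxy
    obtain ⟨e, heE, hxe, hye⟩ := G.dense_covers hd hx hy hxy
    obtain ⟨c, hcx, hcy, rfl⟩ := exists_third (h3 e heE) hxe hye hxy
    exact ⟨c, hcx, hcy, heE⟩
  have NC := no_cycle t ht G hfree hsub hK
  have heIBA : ({i,b,a} : Finset ℕ) ∈ G.edges := tri_perm1 a b i ▸ he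
  have heIAB : ({i,a,b} : Finset ℕ) ∈ G.edges := tri_perm5 a b i ▸ he
  have step2a : ∀ k c : ℕ, k ∈ Finset.Icc 1 (2*t-2) → c ∈ Finset.Icc 1 (2*t-2) →
      k ≠ i → c ≠ i → k ≠ c → ({a,k,c} : Finset ℕ) ∈ G.edges → False := by
    intro k c hk hc hki hci hkc hE
    exact NC i b a k c hib hia (Ne.symm hki) (Ne.symm hci) (Ne.symm hab)
      (hout k b hk hbA) (hout c b hc hbA) (hout k a hk haA) (hout c a hc haA) hkc
      hi hc hbA (Or.inl haA) heIBA hE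
  have step2b : ∀ k c : ℕ, k ∈ Finset.Icc 1 (2*t-2) → c ∈ Finset.Icc 1 (2*t-2) →
      k ≠ i → c ≠ i → k ≠ c → ({b,k,c} : Finset ℕ) ∈ G.edges → False := by
    intro k c hk hc hki hci hkc hE
    exact NC i a b k c hia hib (Ne.symm hki) (Ne.symm hci) hab
      (hout k a hk haA) (hout c a hc haA) (hout k b hk hbA) (hout c b hc hbA) hkc
      hi hc haA (Or.inl hbA) heIAB hE
  have step3a : ∀ k c : ℕ, k ∈ Finset.Icc 1 (2*t-2) → k ≠ i →
      c ∉ Finset.Icc 1 (2*t-2) → c ≠ a → c ≠ b →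
      ({a,k,c} : Finset ℕ) ∈ G.edges → False := by
    intro k c hk hki hcA hca hcb hE
    exact NC i b a c k hib hia (Ne.symm (hout i c hi hcA)) (Ne.symm hki) (Ne.symm hab)
      (Ne.symm hcb) (hout k b hk hbA) (Ne.symm hca) (hout k a hk haA) (hout k c hk hcA)
      hi hk hbA (Or.inl haA) heIBA (tri_perm3 a k c ▸ hE)
  have step3b : ∀ k c : ℕ, k ∈ Finset.Icc 1 (2*t-2) → k ≠ i →
      c ∉ Finset.Icc 1 (2*t-2) → c ≠ a → c ≠ b →
      ({b,k,c} : Finset ℕ) ∈ G.edges → False := by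
    intro k c hk hki hcA hca hcb hE
    exact NC i a b c k hia hib (Ne.symm (hout i c hi hcA)) (Ne.symm hki) hab
      (Ne.symm hca) (hout k a hk haA) (Ne.symm hcb) (hout k b hk hbA) (hout k c hk hcA)
      hi hk haA (Or.inl hbA) heIAB (tri_perm3 b k c ▸ hE)
  have no_ai : ∀ k, k ∈ Finset.Icc 1 (2*t-2) → k ≠ i →
      ({a,i,k} : Finset ℕ) ∈ G.edges → False := by
    intro k hk hki hE
    obtain ⟨k1, hk1A, hk1i, hk1k⟩ := pick_other t ht i k
    obtain ⟨c, hcb, hck1, hcE⟩ := pair_edge b k1 hb (hsub hk1A) (hout k1 b hk1A hbA)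
    by_cases hcA : c ∈ Finset.Icc 1 (2*t-2)
    · by_cases hci : c = i
      · have hcE' : ({b,k1,i} : Finset ℕ) ∈ G.edges := hci ▸ hcE
        exact NC k a i b k1 (Ne.symm (hout k a hk haA)) hki
          (Ne.symm (hout k b hk hbA)) (Ne.symm hk1k) (Ne.symm hia) hab
          (hout k1 a hk1A haA) hib (Ne.symm hk1i) (hout k1 b hk1A hbA)
          hk hk1A haA (Or.inr hbA) (tri_perm5 a i k ▸ hE) (tri_perm5 b k1 i ▸ hcE')
      · exact step2b k1 c hk1A hcA hk1i hci (Ne.symm hck1) hcE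
    · by_cases hca : c = a
      · have hcE' : ({b,k1,a} : Finset ℕ) ∈ G.edges := hca ▸ hcE
        exact NC k1 b a i k (Ne.symm (hout k1 b hk1A hbA)) (Ne.symm (hout k1 a hk1A haA))
          hk1i hk1k (Ne.symm hab) (Ne.symm hib) (hout k b hk hbA)
          (Ne.symm hia) (hout k a hk haA) (Ne.symm hki)
          hk1A hk hbA (Or.inl haA) (tri_perm2 b k1 a ▸ hcE') hE
      · exact step3b k1 c hk1A hk1i hcA hca hcb hcE
  have Nak : ∀ k, k ∈ Finset.Icc 1 (2*t-2) → k ≠ i → G.link2 a k = ({b} : Set ℕ) := by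
    intro k hk hki
    have huniq : ∀ c, ({a,k,c} : Finset ℕ) ∈ G.edges → c = b := by
      intro c hc
      obtain ⟨hak, hac, hkc⟩ := edge3_distinct G h3 hc
      by_cases hcA : c ∈ Finset.Icc 1 (2*t-2)
      · by_cases hci : c = i
        · exact (no_ai k hk hki (tri_perm3 a k i ▸ (hci ▸ hc))).elim
        · exact (step2a k c hk hcA hki hci hkc hc).elim
      · by_cases hcb : c = b
        · exact hcb
        · exact (step3a k c hk hki hcA (Ne.symm hac) hcb hc).elim
    obtain ⟨c0, hc0a, hc0k, hc0E⟩ := pair_edge a k ha (hsub hk) (hout k a hk haA)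
    have hc0b : ({a,k,b} : Finset ℕ) ∈ G.edges := (huniq c0 hc0E) ▸ hc0E
    ext c
    simp only [HyperGraph.link2, Set.mem_setOf_eq, Set.mem_singleton_iff]
    constructor
    · exact huniq c
    · rintro rfl; exact hc0b
  have edge_ab : ∀ k1, k1 ∈ Finset.Icc 1 (2*t-2) → k1 ≠ i →
      ({a,k1,b} : Finset ℕ) ∈ G.edges := by
    intro k1 hk1 hk1i
    have hmem : b ∈ G.link2 a k1 := by
      rw [Nak k1 hk1 hk1i]; exact Set.mem_singleton b
    exact hmem
  have no_bi : ∀ k, k ∈ Finset.Icc 1 (2*t-2) → k ≠ i →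
      ({b,i,k} : Finset ℕ) ∈ G.edges → False := by
    intro k hk hki hE
    obtain ⟨k1, hk1A, hk1i, hk1k⟩ := pick_other t ht i k
    have hEab := edge_ab k1 hk1A hk1i
    exact NC k1 a b i k (Ne.symm (hout k1 a hk1A haA)) (Ne.symm (hout k1 b hk1A hbA))
      hk1i hk1k hab (Ne.symm hia) (hout k a hk haA)
      (Ne.symm hib) (hout k b hk hbA) (Ne.symm hki)
      hk1A hk haA (Or.inl hbA) (tri_perm2 a k1 b ▸ hEab) hE
  have Nbk : ∀ k, k ∈ Finset.Icc 1 (2*t-2) → k ≠ i → G.link2 b k = ({a} : Set ℕ) := by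
    intro k hk hki
    have huniq : ∀ c, ({b,k,c} : Finset ℕ) ∈ G.edges → c = a := by
      intro c hc
      obtain ⟨hbk, hbc, hkc⟩ := edge3_distinct G h3 hc
      by_cases hcA : c ∈ Finset.Icc 1 (2*t-2)
      · by_cases hci : c = i
        · exact (no_bi k hk hki (tri_perm3 b k i ▸ (hci ▸ hc))).elim
        · exact (step2b k c hk hcA hki hci hkc hc).elim
      · by_cases hca : c = a
        · exact hca
        · exact (step3b k c hk hki hcA hca (Ne.symm hbc) hc).elim
    obtain ⟨c0, hc0b, hc0k, hc0E⟩ := pair_edge b k hb (hsub hk) (hout k b hk hbA)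
    have hc0a : ({b,k,a} : Finset ℕ) ∈ G.edges := (huniq c0 hc0E) ▸ hc0E
    ext c
    simp only [HyperGraph.link2, Set.mem_setOf_eq, Set.mem_singleton_iff]
    constructor
    · exact huniq c
    · rintro rfl; exact hc0a
  obtain ⟨k1, hk1A, hk1i, _⟩ := pick_other t ht i i
  have hEab := edge_ab k1 hk1A hk1i
  have Nai : G.link2 a i = ({b} : Set ℕ) := by
    have huniq : ∀ c, ({a,i,c} : Finset ℕ) ∈ G.edges → c = b := by
      intro c hc
      obtain ⟨hai', hac, hic⟩ := edge3_distinct G h3 hc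
      by_cases hcA : c ∈ Finset.Icc 1 (2*t-2)
      · exact ((no_ai c hcA (Ne.symm hic) hc).elim)
      · by_cases hcb : c = b
        · exact hcb
        · exact (NC k1 b a c i (Ne.symm (hout k1 b hk1A hbA)) (Ne.symm (hout k1 a hk1A haA))
            (Ne.symm (hout k1 c hk1A hcA)) hk1i (Ne.symm hab) (Ne.symm hcb) (Ne.symm hib)
            hac (Ne.symm hia) (fun h => hcA (h ▸ hi))
            hk1A hi hbA (Or.inl haA) (tri_perm4 a k1 b ▸ hEab) (tri_perm3 a i c ▸ hc)).elim
    ext c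
    simp only [HyperGraph.link2, Set.mem_setOf_eq, Set.mem_singleton_iff]
    constructor
    · exact huniq c
    · intro hcb2; rw [hcb2]; exact tri_perm3 a b i ▸ he
  have Nbi : G.link2 b i = ({a} : Set ℕ) := by
    have huniq : ∀ c, ({b,i,c} : Finset ℕ) ∈ G.edges → c = a := by
      intro c hc
      obtain ⟨hbi', hbc, hic⟩ := edge3_distinct G h3 hc
      by_cases hcA : c ∈ Finset.Icc 1 (2*t-2)
      · exact ((no_bi c hcA (Ne.symm hic) hc).elim)
      · by_cases hca : c = a
        · exact hca
        · exact (NC k1 a b c i (Ne.symm (hout k1 a hk1A haA)) (Ne.symm (hout k1 b hk1A hbA))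
            (Ne.symm (hout k1 c hk1A hcA)) hk1i hab (Ne.symm hca) (Ne.symm hia)
            hbc (Ne.symm hib) (fun h => hcA (h ▸ hi))
            hk1A hi haA (Or.inl hbA) (tri_perm2 a k1 b ▸ hEab) (tri_perm3 b i c ▸ hc)).elim
    ext c
    simp only [HyperGraph.link2, Set.mem_setOf_eq, Set.mem_singleton_iff]
    constructor
    · exact huniq c
    · intro hca2; rw [hca2]; exact tri_perm4 a b i ▸ he
  refine Or.inl ⟨hab, ha, hb, haA, hbA, ?_⟩
  intro k hk
  by_cases hki : k = i
  · subst hki; exact ⟨Nai, Nbi⟩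
  · exact ⟨Nak k hk hki, Nbk k hk hki⟩
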